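/- Let w : ℤ → ℝ → ℝ be a family of differentiable functions satisfying for all n ∈ ℤ and t ∈ ℝ the equation ẇ_n = w_n (w_n + 1)(w_{n+2} w_{n+1} − w_{n−1} w_{n−2}). Define u_n(t) = w_{n+2}(t) w_{n+1}(t) (w_n(t) + 1). Then for all n ∈ ℤ and t ∈ ℝ, u̇_n = u_n (u_{n+2} + u_{n+1} − u_{n−1} − u_{n−2}), i.e., the Miura-type transformation u_n = w_{n+2} w_{n+1}(w_n + 1) maps solutions of the modified equation to solutions of the INB equation. -/

import Mathlib

/-- Equation `ẇₙ = wₙ(wₙ+1)(w_{n+2}w_{n+1} − w_{n−1}w_{n−2})` is transformed into the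
INB equation by the Miura-type transformation `uₙ = w_{n+2} w_{n+1} (wₙ + 1)`. -/
theorem stmt_9 (w : ℤ → ℝ → ℝ)
    (hw : ∀ (n : ℤ) (t : ℝ), HasDerivAt (w n)
      (w n t * (w n t + 1) * (w (n + 2) t * w (n + 1) t - w (n - 1) t * w (n - 2) t)) t)
    (u : ℤ → ℝ → ℝ)
    (hu : ∀ (n : ℤ) (t : ℝ), u n t = w (n + 2) t * w (n + 1) t * (w n t + 1)) :
    ∀ (n : ℤ) (t : ℝ), HasDerivAt (u n)
      (u n t * (u (n + 2) t + u (n + 1) t - u (n - 1) t - u (n - 2) t)) t := by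
  intro n t
  have hfun : u n = fun s => w (n + 2) s * w (n + 1) s * (w n s + 1) := by
    funext s; exact hu n s
  rw [hfun]
  have h := ((hw (n + 2) t).mul (hw (n + 1) t)).mul ((hw n t).add_const 1)
  convert h using 1
  · rfl
  · rfl
  · rfl
  simp only [hu, Pi.mul_apply]
  simp only [show n + 2 + 2 = n + 4 by ring, show n + 2 + 1 = n + 3 by ring,
    show n + 1 + 2 = n + 3 by ring, show n + 1 + 1 = n + 2 by ring,
    show n + 2 - 1 = n + 1 by ring, show n + 2 - 2 = n by ring,
    show n + 1 - 1 = n by ring, show n + 1 - 2 = n - 1 by ring,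
    show n - 1 + 2 = n + 1 by ring, show n - 1 + 1 = n by ring,
    show n - 2 + 2 = n by ring, show n - 2 + 1 = n - 1 by ring,
    show n - 1 - 1 = n - 2 by ring, show n - 2 - 1 = n - 3 by ring]
  ring
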